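/- (Combined regret decomposition.) Let μ, f*, f_new, y* ∈ ℝ, σ*, σ_new > 0, β ≥ 0, and suppose |μ* − f*| ≤ √β·σ* and |μ_new − f_new| ≤ √β·σ_new, where μ*, σ* (resp. μ_new, σ_new) are the posterior mean and standard deviation at the optimum (resp. consensus point). Then with z_new = (μ_new − y*)/σ_new and z* = (μ* − y*)/σ*, the regret r = f* − f_new satisfies r ≤ σ*·τ(z*) + √β·σ* + σ_new·(τ(−z_new) − τ(z_new) + √β). -/

import Mathlib

open Real MeasureTheory Filter

/-- The standard normal probability density function φ. -/
noncomputable def stdNormalPDF (z : ℝ) : ℝ := (Real.sqrt (2 * Real.pi))⁻¹ * Real.exp (-z ^ 2 / 2)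

/-- The standard normal cumulative distribution function Φ. -/
noncomputable def stdNormalCDF (z : ℝ) : ℝ := ∫ t in Set.Iic z, stdNormalPDF t

/-- τ(z) = z Φ(z) + φ(z). -/
noncomputable def tau (z : ℝ) : ℝ := z * stdNormalCDF z + stdNormalPDF z

lemma stdNormalPDF_nonneg (z : ℝ) : 0 ≤ stdNormalPDF z := by
  unfold stdNormalPDF
  positivity

lemma stdNormalPDF_eq (z : ℝ) :
    stdNormalPDF z = (Real.sqrt (2 * Real.pi))⁻¹ * Real.exp (-(1/2) * z ^ 2) := by
  unfold stdNormalPDF; ring_nf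

lemma integrable_stdNormalPDF : Integrable stdNormalPDF := by
  have h := integrable_exp_neg_mul_sq (by norm_num : (0:ℝ) < 1/2)
  have := h.const_mul (Real.sqrt (2 * Real.pi))⁻¹
  refine this.congr ?_
  filter_upwards with x
  rw [stdNormalPDF_eq]

lemma integral_stdNormalPDF : ∫ t, stdNormalPDF t = 1 := by
  have h : (∫ x : ℝ, Real.exp (-(1/2) * x ^ 2)) = Real.sqrt (π / (1/2)) :=
    integral_gaussian (1/2)
  have heq : (∫ t, stdNormalPDF t)
      = (Real.sqrt (2 * Real.pi))⁻¹ * ∫ x : ℝ, Real.exp (-(1/2) * x ^ 2) := by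
    rw [← integral_const_mul]
    exact integral_congr_ae (by filter_upwards with x; rw [stdNormalPDF_eq])
  rw [heq, h]
  have h2 : π / (1/2) = 2 * π := by ring
  rw [h2, inv_mul_cancel₀]
  positivity

lemma stdNormalPDF_neg (z : ℝ) : stdNormalPDF (-z) = stdNormalPDF z := by
  unfold stdNormalPDF; ring_nf

lemma stdNormalCDF_neg (z : ℝ) : stdNormalCDF (-z) = ∫ t in Set.Ioi z, stdNormalPDF t := by
  unfold stdNormalCDF
  have h1 : (∫ t in Set.Iic (-z), stdNormalPDF t)
      = ∫ t in Set.Iic (-z), stdNormalPDF (-t) :=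
    integral_congr_ae (by filter_upwards with x; rw [stdNormalPDF_neg])
  rw [h1, integral_comp_neg_Iic (-z) stdNormalPDF, neg_neg]

lemma stdNormalCDF_add_neg (z : ℝ) : stdNormalCDF z + stdNormalCDF (-z) = 1 := by
  rw [stdNormalCDF_neg, ← integral_stdNormalPDF]
  exact intervalIntegral.integral_Iic_add_Ioi
    integrable_stdNormalPDF.integrableOn integrable_stdNormalPDF.integrableOn

lemma stdNormalCDF_nonneg (z : ℝ) : 0 ≤ stdNormalCDF z :=
  integral_nonneg fun t => stdNormalPDF_nonneg t

lemma stdNormalCDF_le_one (z : ℝ) : stdNormalCDF z ≤ 1 := by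
  have := stdNormalCDF_add_neg z
  have := stdNormalCDF_nonneg (-z)
  linarith

lemma hasDerivAt_neg_stdNormalPDF (x : ℝ) :
    HasDerivAt (fun t => -stdNormalPDF t) (x * stdNormalPDF x) x := by
  have h : HasDerivAt (fun t : ℝ => -t ^ 2 / 2) (-x) x := by
    have := ((hasDerivAt_pow 2 x).neg).div_const 2
    simpa using this.congr_deriv (by push_cast; ring)
  have h2 : HasDerivAt (fun t : ℝ => Real.exp (-t ^ 2 / 2))
      (Real.exp (-x ^ 2 / 2) * (-x)) x := h.exp
  have h3 := (h2.const_mul (Real.sqrt (2 * Real.pi))⁻¹).neg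
  refine h3.congr_deriv ?_ |>.congr_of_eventuallyEq ?_
  · unfold stdNormalPDF; ring
  · filter_upwards with t; unfold stdNormalPDF; rfl

lemma integrableOn_mul_stdNormalPDF (a : ℝ) :
    IntegrableOn (fun t => t * stdNormalPDF t) (Set.Ioi a) := by
  have h := integrable_mul_exp_neg_mul_sq (by norm_num : (0:ℝ) < 1/2)
  have := h.const_mul (Real.sqrt (2 * Real.pi))⁻¹
  have h2 : Integrable (fun t => t * stdNormalPDF t) := by
    refine this.congr ?_
    filter_upwards with x
    rw [stdNormalPDF_eq]; ring
  exact h2.integrableOn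

lemma integral_Ioi_mul_stdNormalPDF (a : ℝ) :
    ∫ t in Set.Ioi a, t * stdNormalPDF t = stdNormalPDF a := by
  have hcont : ContinuousWithinAt (fun t => -stdNormalPDF t) (Set.Ici a) a :=
    (hasDerivAt_neg_stdNormalPDF a).continuousAt.continuousWithinAt
  have htend : Tendsto (fun t => -stdNormalPDF t) atTop (nhds 0) := by
    rw [← neg_zero]
    apply Tendsto.neg
    have : Tendsto (fun t : ℝ => Real.exp (-t ^ 2 / 2)) atTop (nhds 0) := by
      apply Real.tendsto_exp_atBot.comp
      apply Filter.Tendsto.atBot_div_const (by norm_num)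
      exact tendsto_neg_atBot_iff.mpr (tendsto_pow_atTop (by norm_num))
    have h2 := this.const_mul (Real.sqrt (2 * Real.pi))⁻¹
    rw [mul_zero] at h2
    exact h2
  have := MeasureTheory.integral_Ioi_of_hasDerivAt_of_tendsto hcont
    (fun x _ => hasDerivAt_neg_stdNormalPDF x) (integrableOn_mul_stdNormalPDF a) htend
  rw [this]; ring

lemma mills (a : ℝ) (ha : 0 < a) : a * stdNormalCDF (-a) ≤ stdNormalPDF a := by
  rw [stdNormalCDF_neg, ← integral_Ioi_mul_stdNormalPDF a, ← integral_const_mul]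
  apply setIntegral_mono_on
  · exact (integrable_stdNormalPDF.integrableOn.const_mul a)
  · exact integrableOn_mul_stdNormalPDF a
  · exact measurableSet_Ioi
  · intro x hx
    exact mul_le_mul_of_nonneg_right (le_of_lt hx) (stdNormalPDF_nonneg x)

lemma le_tau (z : ℝ) : z ≤ tau z := by
  unfold tau
  rcases le_or_gt z 0 with hz | hz
  · have h1 : z * 1 ≤ z * stdNormalCDF z :=
      mul_le_mul_of_nonpos_left (stdNormalCDF_le_one z) hz
    have := stdNormalPDF_nonneg z
    linarith
  · have hm := mills z hz
    have h := stdNormalCDF_add_neg z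
    nlinarith

lemma tau_sub_tau_neg (z : ℝ) : tau z - tau (-z) = z := by
  unfold tau
  rw [stdNormalPDF_neg]
  have h := stdNormalCDF_add_neg z
  have hz : z * (stdNormalCDF z + stdNormalCDF (-z)) = z * 1 := by rw [h]
  nlinarith

theorem combined_regret_decomposition
    (μstar μnew fstar fnew ystar σstar σnew β : ℝ)
    (hσstar : 0 < σstar) (hσnew : 0 < σnew) (hβ : 0 ≤ β)
    (hstar : |μstar - fstar| ≤ Real.sqrt β * σstar)
    (hnew : |μnew - fnew| ≤ Real.sqrt β * σnew) :
    fstar - fnew ≤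
      σstar * tau ((μstar - ystar) / σstar) + Real.sqrt β * σstar +
      σnew * (tau (-((μnew - ystar) / σnew)) - tau ((μnew - ystar) / σnew) + Real.sqrt β) := by
  set zs := (μstar - ystar) / σstar with hzs
  set zn := (μnew - ystar) / σnew with hzn
  have h1 : fstar - μstar ≤ Real.sqrt β * σstar := by
    have := abs_le.mp hstar; linarith
  have h2 : μnew - fnew ≤ Real.sqrt β * σnew := by
    have := abs_le.mp hnew; linarith
  have h3 : μstar - ystar ≤ σstar * tau zs := by
    have := le_tau zs
    have := mul_le_mul_of_nonneg_left this hσstar.le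
    rw [hzs] at this ⊢
    calc μstar - ystar = σstar * ((μstar - ystar) / σstar) := by
          field_simp
      _ ≤ σstar * tau ((μstar - ystar) / σstar) := this
  have h4 : tau (-zn) - tau zn = -zn := by
    have := tau_sub_tau_neg zn; linarith
  have h5 : σnew * (tau (-zn) - tau zn + Real.sqrt β)
      = -(μnew - ystar) + Real.sqrt β * σnew := by
    rw [h4, hzn]; field_simp
  rw [h5]
  linarith
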